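/- Fix an integer M ≥ 1 and let R : (0,∞) → (0,∞) satisfy lim_{SNR→∞} R(SNR)/log₂(SNR) = M (pre-log equal to the maximum number of rounds). Then lim_{SNR→∞} E[X(R(SNR), SNR)] = M. -/

import Mathlib

open MeasureTheory ProbabilityTheory Real Filter Topology
open scoped ENNReal

/-- Number of IR H-ARQ rounds: `X(R, SNR) = min(M, min{m ≥ 1 : Σ_{i=1}^m log₂(1+SNR·Hᵢ) > R})`
(realized as the infimum of `{M} ∪ {m ≥ 1 : accumulated mutual information exceeds R}`). -/
noncomputable def numRounds {Ω : Type*} (H : ℕ → Ω → ℝ) (M : ℕ) (snr R : ℝ) (ω : Ω) : ℕ :=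
  sInf ({M} ∪ {m | 1 ≤ m ∧ R < ∑ i ∈ Finset.range m, Real.logb 2 (1 + snr * H i ω)})

private lemma expMeasure_Iio_zero : expMeasure 1 (Set.Iio 0) = 0 := by
  have h : (expMeasure 1) (Set.Iio 0) = ∫⁻ y in Set.Iio 0, exponentialPDF 1 y := by
    rw [expMeasure, gammaMeasure, withDensity_apply _ measurableSet_Iio]
    rfl
  rw [h, lintegral_exponentialPDF_of_nonpos le_rfl]

private lemma expMeasure_Ioi {t : ℝ} (ht : 0 ≤ t) :
    expMeasure 1 (Set.Ioi t) = ENNReal.ofReal (Real.exp (-t)) := by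
  have hprob : IsProbabilityMeasure (expMeasure 1) := isProbabilityMeasure_expMeasure one_pos
  have hIic : expMeasure 1 (Set.Iic t) = ENNReal.ofReal (1 - Real.exp (-t)) := by
    have h : (expMeasure 1) (Set.Iic t) = ∫⁻ y in Set.Iic t, exponentialPDF 1 y := by
      rw [expMeasure, gammaMeasure, withDensity_apply _ measurableSet_Iic]
      rfl
    rw [h, lintegral_exponentialPDF_eq_antiDeriv one_pos, if_pos ht, one_mul]
  have hsub : (0:ℝ) ≤ 1 - Real.exp (-t) :=
    sub_nonneg.2 (Real.exp_le_one_iff.2 (neg_nonpos.2 ht))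
  have hcompl : Set.Ioi t = (Set.Iic t)ᶜ := (Set.compl_Iic).symm
  rw [hcompl, measure_compl measurableSet_Iic (measure_ne_top _ _), measure_univ, hIic,
    ← ENNReal.ofReal_one, ← ENNReal.ofReal_sub _ hsub]
  norm_num

private lemma measurable_sumlogb {Ω : Type*} [MeasurableSpace Ω] (H : ℕ → Ω → ℝ)
    (hmeas : ∀ i, Measurable (H i)) (snr : ℝ) (m : ℕ) :
    Measurable fun ω => ∑ i ∈ Finset.range m, Real.logb 2 (1 + snr * H i ω) := by
  apply Finset.measurable_sum
  intro i _
  have h1 : Measurable fun ω => 1 + snr * H i ω :=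
    measurable_const.add (measurable_const.mul (hmeas i))
  simpa [Real.logb] using (Real.measurable_log.comp h1).div_const (Real.log 2)

private lemma measurable_numRounds {Ω : Type*} [MeasurableSpace Ω] (H : ℕ → Ω → ℝ)
    (hmeas : ∀ i, Measurable (H i)) (M : ℕ) (snr R : ℝ) :
    Measurable (numRounds H M snr R) := by
  classical
  set S : Ω → Set ℕ := fun ω =>
    ({M} ∪ {m | 1 ≤ m ∧ R < ∑ i ∈ Finset.range m, Real.logb 2 (1 + snr * H i ω)}) with hS
  have hP : ∀ j : ℕ, MeasurableSet {ω : Ω | j ∈ S ω} := by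
    intro j
    have heq : {ω : Ω | j ∈ S ω} =
        {ω : Ω | j = M} ∪ ({ω : Ω | 1 ≤ j} ∩
          {ω : Ω | R < ∑ i ∈ Finset.range j, Real.logb 2 (1 + snr * H i ω)}) := by
      ext ω
      simp [hS, Set.mem_union, Set.mem_setOf_eq, and_assoc]
    rw [heq]
    refine MeasurableSet.union ?_ (MeasurableSet.inter ?_ ?_)
    · by_cases h : j = M <;> simp [h]
    · by_cases h : 1 ≤ j <;> simp [h]
    · exact measurableSet_lt measurable_const (measurable_sumlogb H hmeas snr j)
  apply measurable_to_countable'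
  intro k
  have hNE : ∀ ω : Ω, (S ω).Nonempty := fun ω => ⟨M, Or.inl rfl⟩
  have heq : numRounds H M snr R ⁻¹' {k} =
      {ω : Ω | k ∈ S ω} ∩ ⋂ j ∈ Finset.range k, ({ω : Ω | j ∈ S ω})ᶜ := by
    ext ω
    simp only [Set.mem_preimage, Set.mem_singleton_iff, Set.mem_inter_iff, Set.mem_iInter,
      Set.mem_compl_iff, Set.mem_setOf_eq, Finset.mem_range]
    constructor
    · rintro rfl
      exact ⟨Nat.sInf_mem (hNE ω), fun j hj => Nat.notMem_of_lt_sInf hj⟩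
    · rintro ⟨h1, h2⟩
      refine le_antisymm (Nat.sInf_le h1) ?_
      by_contra h
      push_neg at h
      exact h2 _ h (Nat.sInf_mem (hNE ω))
  rw [heq]
  exact (hP k).inter (Finset.measurableSet_biInter _ fun j _ => (hP j).compl)

/-- if the initial rate function has pre-log `M` (the maximum number of rounds),
then `E[X(R(SNR), SNR)] → M` as `SNR → ∞`. -/
theorem expected_rounds_tendsto_M_of_prelog_M
    {Ω : Type*} [MeasurableSpace Ω] (μ : Measure Ω) [IsProbabilityMeasure μ]
    (H : ℕ → Ω → ℝ) (hmeas : ∀ i, Measurable (H i))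
    (hindep : iIndepFun H μ)
    (hdist : ∀ i, Measure.map (H i) μ = expMeasure 1)
    (M : ℕ) (hM : 1 ≤ M) (R : ℝ → ℝ) (hRpos : ∀ snr > (0:ℝ), 0 < R snr)
    (hprelog : Tendsto (fun snr => R snr / Real.logb 2 snr) atTop (𝓝 (M : ℝ))) :
    Tendsto
      (fun snr : ℝ => ∫ ω, (numRounds H M snr (R snr) ω : ℝ) ∂μ)
      atTop (𝓝 (M : ℝ)) := by
  classical
  have hXmeasNat : ∀ snr : ℝ, Measurable (numRounds H M snr (R snr)) :=
    fun snr => measurable_numRounds H hmeas M snr (R snr)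
  have hXmeas : ∀ snr : ℝ, Measurable fun ω => (numRounds H M snr (R snr) ω : ℝ) :=
    fun snr => measurable_from_top.comp (hXmeasNat snr)
  have hXle : ∀ (snr : ℝ) (ω : Ω), numRounds H M snr (R snr) ω ≤ M :=
    fun snr ω => Nat.sInf_le (Or.inl rfl)
  have hX1 : ∀ (snr : ℝ) (ω : Ω), 1 ≤ numRounds H M snr (R snr) ω := by
    intro snr ω
    have hmem : numRounds H M snr (R snr) ω ∈
        ({M} ∪ {m | 1 ≤ m ∧ R snr < ∑ i ∈ Finset.range m, Real.logb 2 (1 + snr * H i ω)}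
          : Set ℕ) :=
      Nat.sInf_mem ⟨M, Or.inl rfl⟩
    rcases hmem with h | h
    · rw [Set.mem_singleton_iff] at h
      omega
    · exact h.1
  have hint : ∀ snr : ℝ, Integrable (fun ω => (numRounds H M snr (R snr) ω : ℝ)) μ := by
    intro snr
    refine (integrable_const (M:ℝ)).mono' (hXmeas snr).aestronglyMeasurable ?_
    filter_upwards with ω
    rw [Real.norm_natCast]
    exact_mod_cast hXle snr ω
  set bad : ℝ → Set Ω := fun snr => {ω | numRounds H M snr (R snr) ω < M} with hbad
  have hbadmeas : ∀ snr : ℝ, MeasurableSet (bad snr) := by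
    intro snr
    have hpre : bad snr = numRounds H M snr (R snr) ⁻¹' (Set.Iio M) := rfl
    rw [hpre]
    exact (hXmeasNat snr) (MeasurableSpace.measurableSet_top)
  -- integral upper bound
  have hub : ∀ snr : ℝ, ∫ ω, (numRounds H M snr (R snr) ω : ℝ) ∂μ ≤ (M:ℝ) := by
    intro snr
    calc ∫ ω, (numRounds H M snr (R snr) ω : ℝ) ∂μ ≤ ∫ _ω, (M:ℝ) ∂μ :=
          integral_mono (hint snr) (integrable_const _) (fun ω => by exact Nat.cast_le.mpr (hXle snr ω))
      _ = (M:ℝ) := by simp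
  -- integral lower bound
  have hlb : ∀ snr : ℝ,
      (M:ℝ) - (M:ℝ) * (μ (bad snr)).toReal ≤ ∫ ω, (numRounds H M snr (R snr) ω : ℝ) ∂μ := by
    intro snr
    have h1 : ∫ ω, ((M:ℝ) - (numRounds H M snr (R snr) ω : ℝ)) ∂μ
        ≤ (M:ℝ) * (μ (bad snr)).toReal := by
      have hle : ∀ ω, (M:ℝ) - (numRounds H M snr (R snr) ω : ℝ)
          ≤ (bad snr).indicator (fun _ => (M:ℝ)) ω := by
        intro ω
        by_cases h : ω ∈ bad snr
        · rw [Set.indicator_of_mem h]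
          have h0 : (0:ℝ) ≤ (numRounds H M snr (R snr) ω : ℝ) := Nat.cast_nonneg _
          linarith
        · rw [Set.indicator_of_notMem h]
          have hEq : numRounds H M snr (R snr) ω = M :=
            le_antisymm (hXle snr ω) (not_lt.1 h)
          rw [hEq]
          simp
      calc ∫ ω, ((M:ℝ) - (numRounds H M snr (R snr) ω : ℝ)) ∂μ
          ≤ ∫ ω, (bad snr).indicator (fun _ => (M:ℝ)) ω ∂μ :=
            integral_mono ((integrable_const _).sub (hint snr))
              ((integrable_const _).indicator (hbadmeas snr)) hle
        _ = (μ (bad snr)).toReal * (M:ℝ) := by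
            rw [integral_indicator_const _ (hbadmeas snr)]
            simp [smul_eq_mul]
            exact Or.inl rfl
        _ = (M:ℝ) * (μ (bad snr)).toReal := mul_comm _ _
    have h2 : ∫ ω, ((M:ℝ) - (numRounds H M snr (R snr) ω : ℝ)) ∂μ
        = (M:ℝ) - ∫ ω, (numRounds H M snr (R snr) ω : ℝ) ∂μ := by
      rw [integral_sub (integrable_const _) (hint snr)]
      simp
    linarith
  -- probability bound on the bad event
  set c : ℝ := (M:ℝ) - 1 with hc
  set T : ℝ → ℝ := fun snr => ((2:ℝ) ^ (R snr / c) - 1) / snr with hT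
  have hbound : ∀ᶠ snr in atTop, (μ (bad snr)).toReal ≤ c * Real.exp (-(T snr)) := by
    filter_upwards [eventually_gt_atTop (0:ℝ)] with snr hsnr
    rcases eq_or_lt_of_le hM with hM1 | hM2
    · -- M = 1 : the bad set is empty
      have hb : bad snr = ∅ := by
        ext ω
        simp only [hbad, Set.mem_setOf_eq, Set.mem_empty_iff_false, iff_false, not_lt]
        have := hX1 snr ω
        omega
      have hc0 : c = 0 := by rw [hc, ← hM1]; norm_num
      simp [hb, hc0]
    · -- M ≥ 2
      have hcpos : (0:ℝ) < c := by
        rw [hc]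
        have : (1:ℝ) < (M:ℝ) := by exact_mod_cast hM2
        linarith
      have hR := hRpos snr hsnr
      have hTnonneg : 0 ≤ T snr := by
        have h1 : (1:ℝ) ≤ (2:ℝ) ^ (R snr / c) :=
          Real.one_le_rpow one_le_two (by positivity)
        exact div_nonneg (by linarith) hsnr.le
      have hsub : bad snr ⊆ ⋃ i ∈ Finset.range (M-1),
          (H i ⁻¹' Set.Ioi (T snr) ∪ H i ⁻¹' Set.Iio 0) := by
        intro ω hω
        have hlt : numRounds H M snr (R snr) ω < M := hω
        have hmem : numRounds H M snr (R snr) ω ∈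
            ({M} ∪ {m | 1 ≤ m ∧ R snr < ∑ i ∈ Finset.range m, Real.logb 2 (1 + snr * H i ω)}
              : Set ℕ) :=
          Nat.sInf_mem ⟨M, Or.inl rfl⟩
        rcases hmem with h | h
        · rw [Set.mem_singleton_iff] at h
          omega
        · obtain ⟨hm1, hmsum⟩ := h
          set m := numRounds H M snr (R snr) ω with hm
          have hmM : m ≤ M - 1 := by omega
          by_cases hneg : ∀ i ∈ Finset.range m, 0 ≤ H i ω
          · have hmne : ((m:ℝ)) ≠ 0 := Nat.cast_ne_zero.2 (by omega)
            have hexists : ∃ i ∈ Finset.range m,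
                R snr / (m:ℝ) < Real.logb 2 (1 + snr * H i ω) := by
              apply Finset.exists_lt_of_sum_lt
              rw [Finset.sum_const, Finset.card_range, nsmul_eq_mul, mul_div_cancel₀ _ hmne]
              exact hmsum
            obtain ⟨i, hi, hilt⟩ := hexists
            have hxpos : 0 < 1 + snr * H i ω := by
              have h0 := hneg i hi
              nlinarith
            have hmle : (m:ℝ) ≤ c := by
              rw [hc]
              have h1 : (m:ℝ) ≤ ((M-1:ℕ):ℝ) := by exact_mod_cast hmM
              rwa [Nat.cast_sub hM, Nat.cast_one] at h1
            have hmpos : (0:ℝ) < (m:ℝ) := by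
              have h0 : 0 < m := hm1
              exact_mod_cast h0
            have hklt : R snr / c < Real.logb 2 (1 + snr * H i ω) :=
              lt_of_le_of_lt (div_le_div_of_nonneg_left hR.le hmpos hmle) hilt
            have h2lt : (2:ℝ) ^ (R snr / c) < 1 + snr * H i ω :=
              (Real.lt_logb_iff_rpow_lt one_lt_two hxpos).1 hklt
            have hTi : T snr < H i ω := by
              rw [hT]
              simp only
              rw [div_lt_iff₀ hsnr]
              nlinarith
            have hirange : i ∈ Finset.range (M-1) := by
              rw [Finset.mem_range] at hi ⊢
              omega
            exact Set.mem_iUnion₂.2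
              ⟨i, hirange, Set.mem_union_left _ (Set.mem_preimage.2 (Set.mem_Ioi.2 hTi))⟩
          · push_neg at hneg
            obtain ⟨i, hi, hineg⟩ := hneg
            have hirange : i ∈ Finset.range (M-1) := by
              rw [Finset.mem_range] at hi ⊢
              omega
            exact Set.mem_iUnion₂.2
              ⟨i, hirange, Set.mem_union_right _ (Set.mem_preimage.2 (Set.mem_Iio.2 hineg))⟩
      have hmeasbound : μ (bad snr) ≤ ((M-1:ℕ) : ℝ≥0∞) * ENNReal.ofReal (Real.exp (-(T snr))) := by
        calc μ (bad snr)
            ≤ μ (⋃ i ∈ Finset.range (M-1), (H i ⁻¹' Set.Ioi (T snr) ∪ H i ⁻¹' Set.Iio 0)) :=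
              measure_mono hsub
          _ ≤ ∑ i ∈ Finset.range (M-1), μ (H i ⁻¹' Set.Ioi (T snr) ∪ H i ⁻¹' Set.Iio 0) :=
              measure_biUnion_finset_le _ _
          _ ≤ ∑ _i ∈ Finset.range (M-1), ENNReal.ofReal (Real.exp (-(T snr))) := by
              apply Finset.sum_le_sum
              intro i _
              have h0 : μ (H i ⁻¹' Set.Iio 0) = 0 := by
                rw [← Measure.map_apply (hmeas i) measurableSet_Iio, hdist i, expMeasure_Iio_zero]
              have hA : μ (H i ⁻¹' Set.Ioi (T snr)) = ENNReal.ofReal (Real.exp (-(T snr))) := by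
                rw [← Measure.map_apply (hmeas i) measurableSet_Ioi, hdist i,
                  expMeasure_Ioi hTnonneg]
              calc μ (H i ⁻¹' Set.Ioi (T snr) ∪ H i ⁻¹' Set.Iio 0)
                  ≤ μ (H i ⁻¹' Set.Ioi (T snr)) + μ (H i ⁻¹' Set.Iio 0) := measure_union_le _ _
                _ = ENNReal.ofReal (Real.exp (-(T snr))) := by rw [h0, hA, add_zero]
          _ = ((M-1:ℕ) : ℝ≥0∞) * ENNReal.ofReal (Real.exp (-(T snr))) := by
              rw [Finset.sum_const, Finset.card_range, nsmul_eq_mul]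
      have htr := ENNReal.toReal_mono
        (ENNReal.mul_ne_top (ENNReal.natCast_ne_top _) ENNReal.ofReal_ne_top) hmeasbound
      rw [ENNReal.toReal_mul, ENNReal.toReal_natCast,
        ENNReal.toReal_ofReal (Real.exp_nonneg _)] at htr
      have hcast : ((M-1:ℕ):ℝ) = c := by rw [hc, Nat.cast_sub hM, Nat.cast_one]
      rwa [hcast] at htr
  -- the bound tends to zero
  have hB0 : Tendsto (fun snr => c * Real.exp (-(T snr))) atTop (𝓝 0) := by
    rcases eq_or_lt_of_le hM with hM1 | hM2
    · have hc0 : c = 0 := by rw [hc, ← hM1]; norm_num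
      simpa [hc0] using (tendsto_const_nhds : Tendsto (fun _ : ℝ => (0:ℝ)) atTop (𝓝 0))
    · have hcpos : (0:ℝ) < c := by
        rw [hc]
        have : (1:ℝ) < (M:ℝ) := by exact_mod_cast hM2
        linarith
      have hTtop : Tendsto T atTop atTop := by
        set ε : ℝ := 1 / (2 * c) with hε
        have hεpos : 0 < ε := by positivity
        have hcomp : Tendsto (fun s : ℝ => s ^ ε - 1) atTop atTop := by
          simpa [sub_eq_add_neg] using
            tendsto_atTop_add_const_right atTop (-1 : ℝ) (tendsto_rpow_atTop hεpos)
        apply tendsto_atTop_mono' atTop ?_ hcomp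
        filter_upwards [eventually_ge_atTop (2:ℝ),
          hprelog.eventually (eventually_gt_nhds (show (M:ℝ) - 1/2 < (M:ℝ) by norm_num))]
          with s hs2 hsR
        have hspos : (0:ℝ) < s := by linarith
        have hs1 : (1:ℝ) < s := by linarith
        have hlogpos : 0 < Real.logb 2 s := Real.logb_pos one_lt_two hs1
        have hRs : ((M:ℝ) - 1/2) * Real.logb 2 s < R s := by
          rwa [lt_div_iff₀ hlogpos] at hsR
        have hid : (1 + ε) * c = (M:ℝ) - 1/2 := by
          have hne : (M:ℝ) - 1 ≠ 0 := ne_of_gt (by linarith)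
          rw [hε, hc]
          field_simp
          ring
        have hdiv : (1 + ε) * Real.logb 2 s < R s / c := by
          rw [lt_div_iff₀ hcpos]
          calc (1 + ε) * Real.logb 2 s * c = ((M:ℝ) - 1/2) * Real.logb 2 s := by
                rw [mul_right_comm, hid]
            _ < R s := hRs
        have hrpow : s ^ ((1:ℝ) + ε) ≤ (2:ℝ) ^ (R s / c) := by
          have h1 : s ^ ((1:ℝ) + ε) = (2:ℝ) ^ ((1 + ε) * Real.logb 2 s) := by
            rw [mul_comm, Real.rpow_mul (by norm_num : (0:ℝ) ≤ 2),
              Real.rpow_logb two_pos (by norm_num) hspos]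
          rw [h1]
          exact Real.rpow_le_rpow_of_exponent_le one_le_two hdiv.le
        have h2 : (s ^ ((1:ℝ) + ε) - 1) / s ≤ T s := by
          rw [hT]
          simp only
          exact (div_le_div_iff_of_pos_right hspos).2 (by linarith)
        have hsplit : s ^ ((1:ℝ) + ε) = s * s ^ ε := by
          rw [Real.rpow_add hspos, Real.rpow_one]
        have h3 : (s ^ ((1:ℝ) + ε) - 1) / s = s ^ ε - 1 / s := by
          rw [hsplit]
          field_simp
        have h4 : (1:ℝ) / s ≤ 1 := by
          rw [div_le_one hspos]
          linarith
        calc s ^ ε - 1 ≤ s ^ ε - 1 / s := by linarith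
          _ = (s ^ ((1:ℝ) + ε) - 1) / s := h3.symm
          _ ≤ T s := h2
      have hexp : Tendsto (fun snr => Real.exp (-(T snr))) atTop (𝓝 0) :=
        Real.tendsto_exp_neg_atTop_nhds_zero.comp hTtop
      simpa using hexp.const_mul c
  have hp : Tendsto (fun snr => (μ (bad snr)).toReal) atTop (𝓝 0) :=
    squeeze_zero' (Eventually.of_forall fun _ => ENNReal.toReal_nonneg) hbound hB0
  have hlow : Tendsto (fun snr => (M:ℝ) - (M:ℝ) * (μ (bad snr)).toReal) atTop (𝓝 (M:ℝ)) := by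
    have h1 := hp.const_mul (M:ℝ)
    simpa using (tendsto_const_nhds : Tendsto (fun _ : ℝ => (M:ℝ)) atTop (𝓝 (M:ℝ))).sub h1
  exact tendsto_of_tendsto_of_tendsto_of_le_of_le hlow tendsto_const_nhds hlb hub
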